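/- arXiv:1801.04638 — 7 statements merged into one kernel-verified Lean document; each statement's English description precedes it below -/
import Mathlib

section
/- Let S be a finite semigroup and φ : S → G a surjective semigroup homomorphism onto a group G. Then there exists a subgroup H of S (an 𝓗-class of S that is a group) such that Hφ = G. -/
open Pointwise

/-- A subset of a semigroup which is a group under the inherited multiplication. -/
def IsSubgroupSet {S : Type} [Semigroup S] (K : Set S) : Prop :=
  (∀ a ∈ K, ∀ b ∈ K, a * b ∈ K) ∧
    ∃ e ∈ K, (∀ a ∈ K, e * a = a ∧ a * e = a) ∧ ∀ a ∈ K, ∃ b ∈ K, a * b = e ∧ b * a = e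

/-- A surjective homomorphism from a finite semigroup onto a group lifts to a subgroup
of the semigroup mapping onto the whole group. -/
theorem lift_group (S G : Type) [Semigroup S] [Finite S] [Group G]
    (φ : S →ₙ* G) (hφ : Function.Surjective φ) :
    ∃ K : Set S, IsSubgroupSet K ∧ φ '' K = Set.univ := by
  classical
  obtain ⟨s₀, hs₀⟩ := hφ 1
  set P : Set S → Prop := fun T => T.Nonempty ∧ (∀ a ∈ T, ∀ b ∈ T, a * b ∈ T) ∧
      φ '' T = Set.univ with hPdef
  have hPuniv : P Set.univ := by
    refine ⟨⟨s₀, trivial⟩, fun _ _ _ _ => trivial, ?_⟩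
    rw [Set.image_univ]
    exact Set.eq_univ_of_forall hφ
  obtain ⟨T, hT, hmin⟩ := (Finite.to_wellFoundedLT (α := Set S)).wf.has_min
    {T | P T} ⟨Set.univ, hPuniv⟩
  have hmin' : ∀ T' : Set S, P T' → T' ⊆ T → T' = T := by
    intro T' hT' hsub
    by_contra hne
    exact hmin T' hT' (lt_of_le_of_ne hsub hne)
  -- image computation helper
  have himg : ∀ a : S, ∀ U : Set S, φ '' U = Set.univ → φ '' ((a * ·) '' U) = Set.univ ∧
      φ '' ((· * a) '' U) = Set.univ := by
    intro a U hU
    constructor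
    · rw [Set.image_image]
      apply Set.eq_univ_of_forall
      intro g
      have : (φ a)⁻¹ * g ∈ φ '' U := by rw [hU]; trivial
      obtain ⟨t, ht, hφt⟩ := this
      exact ⟨t, ht, by show φ (a * t) = g; rw [map_mul, hφt, mul_inv_cancel_left]⟩
    · rw [Set.image_image]
      apply Set.eq_univ_of_forall
      intro g
      have : g * (φ a)⁻¹ ∈ φ '' U := by rw [hU]; trivial
      obtain ⟨t, ht, hφt⟩ := this
      exact ⟨t, ht, by show φ (t * a) = g; rw [map_mul, hφt, inv_mul_cancel_right]⟩
  -- translates of T are equal to T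
  have key : ∀ a ∈ T, (a * ·) '' T = T ∧ (· * a) '' T = T := by
    intro a ha
    constructor
    · apply hmin'
      · refine ⟨⟨a * a, ⟨a, ha, rfl⟩⟩, ?_, (himg a T hT.2.2).1⟩
        rintro _ ⟨t, ht, rfl⟩ _ ⟨t', ht', rfl⟩
        exact ⟨t * (a * t'), hT.2.1 t ht _ (hT.2.1 a ha t' ht'), (mul_assoc ..).symm⟩
      · rintro _ ⟨t, ht, rfl⟩
        exact hT.2.1 a ha t ht
    · apply hmin'
      · refine ⟨⟨a * a, ⟨a, ha, rfl⟩⟩, ?_, (himg a T hT.2.2).2⟩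
        rintro _ ⟨t, ht, rfl⟩ _ ⟨t', ht', rfl⟩
        exact ⟨(t * a) * t', hT.2.1 _ (hT.2.1 t ht a ha) t' ht', mul_assoc ..⟩
      · rintro _ ⟨t, ht, rfl⟩
        exact hT.2.1 t ht a ha
  have solveL : ∀ a ∈ T, ∀ b ∈ T, ∃ x ∈ T, a * x = b := by
    intro a ha b hb
    have := (key a ha).1
    rw [← this] at hb
    obtain ⟨x, hx, hxe⟩ := hb
    exact ⟨x, hx, hxe⟩
  have solveR : ∀ a ∈ T, ∀ b ∈ T, ∃ y ∈ T, y * a = b := by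
    intro a ha b hb
    have := (key a ha).2
    rw [← this] at hb
    obtain ⟨y, hy, hye⟩ := hb
    exact ⟨y, hy, hye⟩
  obtain ⟨a, ha⟩ := hT.1
  obtain ⟨e, he, hae⟩ := solveL a ha a ha
  obtain ⟨f, hf, hfa⟩ := solveR a ha a ha
  -- e is a right identity
  have heR : ∀ b ∈ T, b * e = b := by
    intro b hb
    obtain ⟨y, hy, hya⟩ := solveR a ha b hb
    rw [← hya, mul_assoc, hae]
  -- f is a left identity
  have hfL : ∀ b ∈ T, f * b = b := by
    intro b hb
    obtain ⟨x, hx, hax⟩ := solveL a ha b hb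
    rw [← hax, ← mul_assoc, hfa]
  have hef : f = e := by rw [← heR f hf, hfL e he]
  have heL : ∀ b ∈ T, e * b = b := by intro b hb; rw [← hef]; exact hfL b hb
  refine ⟨T, ⟨hT.2.1, e, he, fun b hb => ⟨heL b hb, heR b hb⟩, ?_⟩, hT.2.2⟩
  intro b hb
  obtain ⟨c, hc, hbc⟩ := solveL b hb e he
  obtain ⟨d, hd, hdb⟩ := solveR b hb e he
  have hcd : d = c := by
    have h1 : d * (b * c) = d := by rw [hbc, heR d hd]
    have h2 : d * (b * c) = c := by rw [← mul_assoc, hdb, heL c hc]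
    rw [← h1, h2]
  exact ⟨c, hc, hbc, by rw [← hcd]; exact hdb⟩
end

section
/- Let S be a finite semigroup and let 𝒳 be a 𝐕-pointlike subset of the semigroup PL_𝐕(S) of 𝐕-pointlike subsets of S. Then the union ⋃𝒳 is a 𝐕-pointlike subset of S. -/
open Pointwise

/-- A variety of finite semigroups: a class of finite semigroups closed under finite
direct products, subsemigroups and homomorphic images. -/
structure SemigroupVariety : Type 1 where
  mem : ∀ (S : Type) [Semigroup S] [Finite S], Prop
  closed_prod : ∀ (S T : Type) [Semigroup S] [Finite S] [Semigroup T] [Finite T],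
    mem S → mem T → mem (S × T)
  closed_sub : ∀ (S : Type) [Semigroup S] [Finite S] (U : Subsemigroup S), mem S → mem U
  closed_hom : ∀ (S T : Type) [Semigroup S] [Finite S] [Semigroup T] [Finite T] (f : S →ₙ* T),
    Function.Surjective f → mem S → mem T

/-- `X ⊆ S` is pointlike with respect to the class `V` of finite semigroups: every
relational morphism from `S` to a member of `V` relates all of `X` to a single point. -/
def Pointlike (V : ∀ (T : Type) [Semigroup T] [Finite T], Prop)
    (S : Type) [Semigroup S] [Finite S] (X : Set S) : Prop :=
  ∀ (T : Type) [Semigroup T] [Finite T], V T →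
    ∀ φ : S → Set T, (∀ s, (φ s).Nonempty) → (∀ a b, φ a * φ b ⊆ φ (a * b)) →
      ∃ t : T, ∀ x ∈ X, t ∈ φ x

/-- The semigroup of `V`-pointlike subsets of `S`, as a subsemigroup of `2^S`. -/
def PLsub (Vm : ∀ (T : Type) [Semigroup T] [Finite T], Prop)
    (S : Type) [Semigroup S] [Finite S] : Subsemigroup (Set S) where
  carrier := {X | Pointlike Vm S X}
  mul_mem' := by
    intro X Y hX hY T _ _ hT φ hne hsub
    obtain ⟨t1, ht1⟩ := hX T hT φ hne hsub
    obtain ⟨t2, ht2⟩ := hY T hT φ hne hsub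
    refine ⟨t1 * t2, ?_⟩
    rintro x ⟨p, hp, q, hq, rfl⟩
    exact hsub p q (Set.mul_mem_mul (ht1 p hp) (ht2 q hq))

/-- The union of a `V`-pointlike collection of `V`-pointlike subsets of `S` is
`V`-pointlike in `S`. -/
theorem pointlike_union (V : SemigroupVariety) (S : Type) [Semigroup S] [Finite S]
    (𝒳 : Set ↥(PLsub V.mem S)) (h𝒳 : Pointlike V.mem ↥(PLsub V.mem S) 𝒳) :
    Pointlike V.mem S (⋃ X ∈ 𝒳, (X : Set S)) := by
  intro T _ _ hT φ hne hsub
  set Φ : ↥(PLsub V.mem S) → Set T := fun X => {t | ∀ x ∈ (X : Set S), t ∈ φ x} with hΦ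
  have hΦne : ∀ X, (Φ X).Nonempty := fun X => X.2 T hT φ hne hsub
  have hΦsub : ∀ A B, Φ A * Φ B ⊆ Φ (A * B) := by
    rintro A B z ⟨t, ht, u, hu, rfl⟩
    rintro x hx
    rcases hx with ⟨p, hp, q, hq, rfl⟩
    exact hsub p q (Set.mul_mem_mul (ht p hp) (hu q hq))
  obtain ⟨t, ht⟩ := h𝒳 T hT Φ hΦne hΦsub
  refine ⟨t, ?_⟩
  intro x hx
  simp only [Set.mem_iUnion] at hx
  obtain ⟨X, hX, hxX⟩ := hx
  exact ht X hX x hxX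
end

section
/- Let S be a finite semigroup and G ≤ S a subgroup. Then the 𝐇-kernel K_𝐇(G), viewed as a subset of S, is an H̄-pointlike subset of S, where H̄ is the variety of finite semigroups all of whose subgroups lie in 𝐇. -/
open Pointwise

/-- A variety of finite groups: a class of finite groups closed under finite direct
products, subgroups and homomorphic images. -/
structure GroupVariety : Type 1 where
  mem : ∀ (G : Type) [Group G] [Finite G], Prop
  closed_prod : ∀ (G H : Type) [Group G] [Finite G] [Group H] [Finite H],
    mem G → mem H → mem (G × H)
  closed_sub : ∀ (G : Type) [Group G] [Finite G] (K : Subgroup G), mem G → mem K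
  closed_hom : ∀ (G H : Type) [Group G] [Finite G] [Group H] [Finite H] (f : G →* H),
    Function.Surjective f → mem G → mem H

/-- The 𝐇-kernel of a finite group: the smallest normal subgroup whose quotient
belongs to the class `P` of finite groups. -/
def HKer (P : ∀ (G : Type) [Group G] [Finite G], Prop) (G : Type) [Group G] [Finite G] :
    Subgroup G :=
  sInf {N : Subgroup G |
    ∃ h : N.Normal, @P (G ⧸ N) (@QuotientGroup.Quotient.group G _ N h) inferInstance}

/-- The class H̄ of finite semigroups all of whose subgroups lie in the variety `V` of
finite groups. -/
def HbarMem (V : GroupVariety) (T : Type) [Semigroup T] [Finite T] : Prop :=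
  ∀ (G : Type) [Group G] [Finite G] (f : G →ₙ* T), Function.Injective f → V.mem G

/-- The 𝐇-kernel of a subgroup of a finite semigroup `S` is H̄-pointlike in `S`. -/
theorem kernel_pointlike (V : GroupVariety) (S : Type) [Semigroup S] [Finite S]
    (G : Type) [Group G] [Finite G] (ι : G →ₙ* S) (hι : Function.Injective ι) :
    Pointlike (HbarMem V) S (ι '' (HKer V.mem G : Subgroup G)) := by
  intro T _ _ hT φ hne hmul
  classical
  -- the graph subsemigroup of the relational morphism, restricted to `G`
  set R : Subsemigroup (G × T) :=
    { carrier := {q | q.2 ∈ φ (ι q.1)}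
      mul_mem' := by
        rintro ⟨a, x⟩ ⟨b, y⟩ hx hy
        have hxy : x * y ∈ φ (ι a) * φ (ι b) := Set.mul_mem_mul hx hy
        have h2 := hmul (ι a) (ι b) hxy
        show (x * y) ∈ φ (ι (a * b))
        rwa [map_mul] } with hRdef
  -- the family of subsemigroups of `R` projecting onto `G`
  set 𝒮 : Set (Subsemigroup (G × T)) :=
    {W | W ≤ R ∧ ∀ g : G, ∃ t : T, (g, t) ∈ W} with h𝒮def
  have hR𝒮 : R ∈ 𝒮 := ⟨le_refl R, fun g => (hne (ι g)).imp fun t ht => ht⟩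
  haveI : Finite (Subsemigroup (G × T)) :=
    Finite.of_injective (fun W => (W : Set (G × T))) SetLike.coe_injective
  obtain ⟨U, hU, hUmin⟩ : ∃ U ∈ 𝒮, ∀ W ∈ 𝒮, id W ≤ id U → id U = id W := by
    obtain ⟨U, hU, h⟩ := Set.Finite.exists_minimalFor id 𝒮 (Set.toFinite 𝒮) ⟨R, hR𝒮⟩
    exact ⟨U, hU, fun W hW hWU => le_antisymm (h hW hWU) hWU⟩
  simp only [id] at hUmin
  -- translations of `U` are onto, by minimality
  have key : ∀ u ∈ U, (∀ v ∈ U, ∃ w ∈ U, u * w = v) ∧ (∀ v ∈ U, ∃ w ∈ U, w * u = v) := by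
    intro u hu
    constructor
    · set W : Subsemigroup (G × T) :=
        { carrier := {x | ∃ w ∈ U, u * w = x}
          mul_mem' := by
            rintro _ _ ⟨a, ha, rfl⟩ ⟨b, hb, rfl⟩
            exact ⟨a * (u * b), mul_mem ha (mul_mem hu hb), (mul_assoc _ _ _).symm⟩ }
      have hWU : W ≤ U := by rintro _ ⟨a, ha, rfl⟩; exact mul_mem hu ha
      have hW𝒮 : W ∈ 𝒮 := by
        refine ⟨hWU.trans hU.1, fun g => ?_⟩
        obtain ⟨t, ht⟩ := hU.2 (u.1⁻¹ * g)
        refine ⟨u.2 * t, (u.1⁻¹ * g, t), ht, ?_⟩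
        ext
        · exact mul_inv_cancel_left _ _
        · rfl
      have hUW : U = W := hUmin W hW𝒮 hWU
      intro v hv
      rw [hUW] at hv
      exact hv
    · set W : Subsemigroup (G × T) :=
        { carrier := {x | ∃ w ∈ U, w * u = x}
          mul_mem' := by
            rintro _ _ ⟨a, ha, rfl⟩ ⟨b, hb, rfl⟩
            exact ⟨a * u * b, mul_mem (mul_mem ha hu) hb, by
              simp only [mul_assoc]⟩ }
      have hWU : W ≤ U := by rintro _ ⟨a, ha, rfl⟩; exact mul_mem ha hu
      have hW𝒮 : W ∈ 𝒮 := by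
        refine ⟨hWU.trans hU.1, fun g => ?_⟩
        obtain ⟨t, ht⟩ := hU.2 (g * u.1⁻¹)
        refine ⟨t * u.2, (g * u.1⁻¹, t), ht, ?_⟩
        ext
        · exact inv_mul_cancel_right _ _
        · rfl
      have hUW : U = W := hUmin W hW𝒮 hWU
      intro v hv
      rw [hUW] at hv
      exact hv
  -- `U` has a two-sided identity
  obtain ⟨t₀, ht₀⟩ := hU.2 1
  have hu₀ : ((1 : G), t₀) ∈ U := ht₀
  obtain ⟨e, he, heu⟩ := (key _ hu₀).2 _ hu₀
  have hide : ∀ v ∈ U, e * v = v := by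
    intro v hv
    obtain ⟨w, hw, rfl⟩ := (key _ hu₀).1 v hv
    rw [← mul_assoc, heu]
  obtain ⟨f, hf, huf⟩ := (key _ hu₀).1 _ hu₀
  have hidf : ∀ v ∈ U, v * f = v := by
    intro v hv
    obtain ⟨w, hw, rfl⟩ := (key _ hu₀).2 v hv
    rw [mul_assoc, huf]
  have hef : e = f := (hidf e he).symm.trans (hide f hf)
  -- group structure on `U`
  letI : One ↥U := ⟨⟨e, he⟩⟩
  have one_mul' : ∀ a : ↥U, (1 : ↥U) * a = a := fun a => Subtype.ext (hide a.1 a.2)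
  have hinv : ∀ a : ↥U, ∃ b : ↥U, b * a = 1 := by
    intro a
    obtain ⟨w, hw, hwa⟩ := (key _ a.2).2 e he
    exact ⟨⟨w, hw⟩, Subtype.ext hwa⟩
  letI : Inv ↥U := ⟨fun a => Classical.choose (hinv a)⟩
  letI : Group ↥U :=
    Group.ofLeftAxioms mul_assoc one_mul' (fun a => Classical.choose_spec (hinv a))
  -- the two projections
  set p : ↥U → T := fun v => v.1.2 with hpdef
  have hp : ∀ a b : ↥U, p (a * b) = p a * p b := fun a b => rfl
  set π : ↥U →* G := MonoidHom.mk' (fun v => v.1.1) (fun a b => rfl) with hπdef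
  have hπs : Function.Surjective π := by
    intro g
    obtain ⟨t, ht⟩ := hU.2 g
    exact ⟨⟨(g, t), ht⟩, rfl⟩
  -- the kernel of the projection to `T`
  set M : Subgroup ↥U :=
    { carrier := {v | p v = p 1}
      one_mem' := rfl
      mul_mem' := by
        intro a b ha hb
        show p (a * b) = p 1
        rw [hp, ha, hb, ← hp, one_mul]
      inv_mem' := by
        intro a ha
        show p a⁻¹ = p 1
        calc p a⁻¹ = p (1 * a⁻¹) := by rw [one_mul]
          _ = p 1 * p a⁻¹ := hp _ _
          _ = p a * p a⁻¹ := by rw [ha]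
          _ = p (a * a⁻¹) := (hp _ _).symm
          _ = p 1 := by rw [mul_inv_cancel] } with hMdef
  haveI hMn : M.Normal := by
    constructor
    intro m hm g
    have hm' : p m = p 1 := hm
    show p (g * m * g⁻¹) = p 1
    calc p (g * m * g⁻¹) = p (g * m) * p g⁻¹ := hp _ _
      _ = (p g * p m) * p g⁻¹ := by rw [hp]
      _ = (p g * p 1) * p g⁻¹ := by rw [hm']
      _ = p (g * 1) * p g⁻¹ := by rw [hp]
      _ = p g * p g⁻¹ := by rw [mul_one]
      _ = p (g * g⁻¹) := (hp _ _).symm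
      _ = p 1 := by rw [mul_inv_cancel]
  -- the quotient embeds in `T`, hence lies in `V`
  have hlift : ∀ a b : ↥U, (QuotientGroup.leftRel M) a b → p a = p b := by
    intro a b hab
    rw [QuotientGroup.leftRel_apply] at hab
    have hab' : p (a⁻¹ * b) = p 1 := hab
    calc p a = p (a * 1) := by rw [mul_one]
      _ = p a * p 1 := hp _ _
      _ = p a * p (a⁻¹ * b) := by rw [hab']
      _ = p (a * (a⁻¹ * b)) := (hp _ _).symm
      _ = p b := by rw [mul_inv_cancel_left]
  set fQ : ↥U ⧸ M → T := Quotient.lift p hlift with hfQdef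
  have hfQmk : ∀ a : ↥U, fQ (QuotientGroup.mk a) = p a := fun a => rfl
  have hfQmul : ∀ x y : ↥U ⧸ M, fQ (x * y) = fQ x * fQ y := by
    intro x y
    refine Quotient.inductionOn₂ x y ?_
    intro a b
    exact hp a b
  have hfQinj : Function.Injective fQ := by
    intro x y
    refine Quotient.inductionOn₂ x y ?_
    intro a b hab
    have hab' : p a = p b := hab
    have hmem : p (a⁻¹ * b) = p 1 :=
      calc p (a⁻¹ * b) = p a⁻¹ * p b := hp _ _
        _ = p a⁻¹ * p a := by rw [hab']
        _ = p (a⁻¹ * a) := (hp _ _).symm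
        _ = p 1 := by rw [inv_mul_cancel]
    exact Quotient.sound (QuotientGroup.leftRel_apply.mpr hmem)
  have hQ : V.mem (↥U ⧸ M) := hT (↥U ⧸ M) ⟨fQ, fun a b => hfQmul a b⟩ hfQinj
  -- push the kernel forward to `G`
  set N : Subgroup G := M.map π with hNdef
  haveI hNn : N.Normal := hMn.map π hπs
  set ψ : ↥U ⧸ M →* G ⧸ N := QuotientGroup.lift M ((QuotientGroup.mk' N).comp π) (by
    intro u hu
    show (QuotientGroup.mk' N) (π u) = 1
    rw [QuotientGroup.mk'_apply, QuotientGroup.eq_one_iff]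
    exact Subgroup.mem_map.mpr ⟨u, hu, rfl⟩) with hψdef
  have hψs : Function.Surjective ψ := by
    intro x
    obtain ⟨g, rfl⟩ := QuotientGroup.mk_surjective x
    obtain ⟨u, rfl⟩ := hπs g
    exact ⟨QuotientGroup.mk u, rfl⟩
  have hGN : V.mem (G ⧸ N) := V.closed_hom _ _ ψ hψs hQ
  have hKN : HKer V.mem G ≤ N := sInf_le ⟨hNn, hGN⟩
  -- conclusion
  refine ⟨p 1, ?_⟩
  rintro _ ⟨k, hk, rfl⟩
  obtain ⟨u, huM, hπu⟩ := Subgroup.mem_map.mp (hKN hk)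
  have hpu : p u = p 1 := huM
  have huR : (u : G × T) ∈ R := hU.1 u.2
  have : p u ∈ φ (ι (π u)) := huR
  rwa [hpu, hπu] at this
end

section
/- Let L be an 𝓛-class in a finite semigroup S. There exists a subgroup G_L of St_R(L) such that for every 𝓗-class H ⊆ L, the restriction to G_L of the natural homomorphism St_R(L) → Γ_R(H) is surjective. -/
open Pointwise

/-- Green's preorder `x ≤_𝓛 y`, i.e. `x ∈ S¹y`. -/
def leL {S : Type} [Semigroup S] (x y : S) : Prop := x = y ∨ ∃ a, x = a * y
/-- Green's preorder `x ≤_𝓡 y`, i.e. `x ∈ yS¹`. -/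
def leR {S : Type} [Semigroup S] (x y : S) : Prop := x = y ∨ ∃ a, x = y * a
/-- Green's relation `𝓛`. -/
def eqL {S : Type} [Semigroup S] (x y : S) : Prop := leL x y ∧ leL y x
/-- Green's relation `𝓡`. -/
def eqR {S : Type} [Semigroup S] (x y : S) : Prop := leR x y ∧ leR y x
/-- Green's preorder `≤_𝓗`. -/
def leH {S : Type} [Semigroup S] (x y : S) : Prop := leL x y ∧ leR x y
/-- Green's relation `𝓗`. -/
def eqH {S : Type} [Semigroup S] (x y : S) : Prop := eqL x y ∧ eqR x y
/-- The 𝓗-class of `x`. -/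
def HClass {S : Type} [Semigroup S] (x : S) : Set S := {y | eqH y x}
/-- The 𝓛-class of `x`. -/
def LClass {S : Type} [Semigroup S] (x : S) : Set S := {y | eqL y x}

/-- The right stabilizer of a subset `X ⊆ S`, as a subset of `S¹ = WithOne S`. -/
def stabR {S : Type} [Semigroup S] (X : Set S) : Set (WithOne S) :=
  {u | ∀ x ∈ X, ∃ y ∈ X, (↑x * u : WithOne S) = ↑y}

section Aux

/-- Stability in a finite monoid: if `x = a * x * u` then `x = x * u ^ k` for some `k ≥ 1`. -/
lemma aux_stab_pow {M : Type*} [Monoid M] [Finite M] (x a u : M) (h : x = a * x * u) :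
    ∃ k, 1 ≤ k ∧ x = x * u ^ k := by
  have key : ∀ n, x = a ^ n * x * u ^ n := by
    intro n
    induction n with
    | zero => simp
    | succ n ih =>
      calc x = a * x * u := h
        _ = a * (a ^ n * x * u ^ n) * u := by rw [← ih]
        _ = a ^ (n + 1) * x * u ^ (n + 1) := by
            rw [pow_succ u n, pow_succ' a n]
            simp [mul_assoc]
  obtain ⟨m, n, hmn, he⟩ := Finite.exists_ne_map_eq_of_infinite (fun n : ℕ => u ^ n)
  rcases hmn.lt_or_gt with hlt | hlt
  · refine ⟨n - m, by omega, ?_⟩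
    calc x = a ^ m * x * u ^ m := key m
      _ = a ^ m * x * u ^ n := by rw [he]
      _ = a ^ m * x * (u ^ m * u ^ (n - m)) := by rw [← pow_add, Nat.add_sub_cancel' hlt.le]
      _ = (a ^ m * x * u ^ m) * u ^ (n - m) := by simp [mul_assoc]
      _ = x * u ^ (n - m) := by rw [← key m]
  · refine ⟨m - n, by omega, ?_⟩
    calc x = a ^ n * x * u ^ n := key n
      _ = a ^ n * x * u ^ m := by rw [← he]
      _ = a ^ n * x * (u ^ n * u ^ (m - n)) := by rw [← pow_add, Nat.add_sub_cancel' hlt.le]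
      _ = (a ^ n * x * u ^ n) * u ^ (m - n) := by simp [mul_assoc]
      _ = x * u ^ (m - n) := by rw [← key n]

variable {S : Type} [Semigroup S]

lemma aux_leL_trans {x y z : S} (h1 : leL x y) (h2 : leL y z) : leL x z := by
  rcases h1 with rfl | ⟨a, rfl⟩
  · exact h2
  · rcases h2 with rfl | ⟨b, rfl⟩
    · exact Or.inr ⟨a, rfl⟩
    · exact Or.inr ⟨a * b, (mul_assoc a b z).symm⟩

lemma aux_eqL_trans {x y z : S} (h1 : eqL x y) (h2 : eqL y z) : eqL x z :=
  ⟨aux_leL_trans h1.1 h2.1, aux_leL_trans h2.2 h1.2⟩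

lemma aux_one_mem_stabR (X : Set S) : (1 : WithOne S) ∈ stabR X :=
  fun x hx => ⟨x, hx, mul_one _⟩

lemma aux_mul_mem_stabR {X : Set S} {u w : WithOne S} (hu : u ∈ stabR X) (hw : w ∈ stabR X) :
    u * w ∈ stabR X := by
  intro x hx
  obtain ⟨y, hy, hxy⟩ := hu x hx
  obtain ⟨z, hz, hyz⟩ := hw y hy
  exact ⟨z, hz, by rw [← mul_assoc, hxy, hyz]⟩

lemma aux_pow_mem_stabR {X : Set S} {u : WithOne S} (hu : u ∈ stabR X) :
    ∀ n, u ^ n ∈ stabR X := by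
  intro n
  induction n with
  | zero => simpa using aux_one_mem_stabR X
  | succ n ih => rw [pow_succ]; exact aux_mul_mem_stabR ih hu

/-- Key lemma: every element of the right stabilizer of an 𝓛-class acts invertibly on it,
with inverse given by a power. -/
lemma aux_exists_inverse [Finite S] (x₀ : S) {u : WithOne S} (hu : u ∈ stabR (LClass x₀)) :
    ∃ v ∈ stabR (LClass x₀),
      (∀ y ∈ LClass x₀, (↑y : WithOne S) * u * v = ↑y) ∧
      (∀ y ∈ LClass x₀, (↑y : WithOne S) * v * u = ↑y) := by
  haveI := Fintype.ofFinite S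
  haveI : Finite (WithOne S) := inferInstanceAs (Finite (Option S))
  have hx₀ : x₀ ∈ LClass x₀ := ⟨Or.inl rfl, Or.inl rfl⟩
  obtain ⟨y₁, hy₁, he⟩ := hu x₀ hx₀
  -- he : ↑x₀ * u = ↑y₁, and y₁ 𝓛 x₀
  have hstep : ∃ k, 1 ≤ k ∧ (↑x₀ : WithOne S) * u ^ k = ↑x₀ := by
    rcases hy₁.2 with heq | ⟨a, ha⟩
    · -- x₀ = y₁
      refine ⟨1, le_refl 1, ?_⟩
      rw [pow_one, he, heq]
    · -- x₀ = a * y₁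
      have h2 : (↑x₀ : WithOne S) = ↑a * ↑x₀ * u := by
        rw [mul_assoc, he, ← WithOne.coe_mul, ← ha]
      obtain ⟨k, hk1, hk2⟩ := aux_stab_pow (↑x₀ : WithOne S) ↑a u h2
      exact ⟨k, hk1, hk2.symm⟩
  obtain ⟨k, hk1, hk2⟩ := hstep
  refine ⟨u ^ (k - 1), aux_pow_mem_stabR hu _, ?_, ?_⟩
  all_goals {
    intro y hy
    have hcomm : u * u ^ (k - 1) = u ^ k := by
      rw [← pow_succ']; congr 1; omega
    have hcomm' : u ^ (k - 1) * u = u ^ k := by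
      rw [← pow_succ]; congr 1; omega
    have hyk : ∀ z ∈ LClass x₀, (↑z : WithOne S) * u ^ k = ↑z := by
      intro z hz
      rcases hz.1 with rfl | ⟨b, rfl⟩
      · exact hk2
      · rw [WithOne.coe_mul, mul_assoc, hk2]
    rw [mul_assoc]
    first
      | rw [hcomm]
      | rw [hcomm']
    exact hyk y hy
  }

end Aux

/-- There is a subgroup `G_L` of `St_R(L)` mapping onto the Schützenberger group of
every 𝓗-class contained in the 𝓛-class `L = L_{x₀}`. -/
theorem lift_schutzenberger (S : Type) [Semigroup S] [Finite S] (x₀ : S) :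
    ∃ G₀ : Set (WithOne S), G₀ ⊆ stabR (LClass x₀) ∧ IsSubgroupSet G₀ ∧
      ∀ h ∈ LClass x₀, ∀ s ∈ stabR (LClass x₀), ∃ g ∈ G₀,
        ∀ x ∈ HClass h, (↑x * s : WithOne S) = ↑x * g := by
  haveI := Fintype.ofFinite S
  haveI : Finite (WithOne S) := inferInstanceAs (Finite (Option S))
  set L := LClass x₀ with hLdef
  set T := stabR L with hTdef
  -- "Good" subsets: subsemigroups of T whose action on L covers that of T
  set Good : Set (WithOne S) → Prop := fun U =>
    U ⊆ T ∧ (∀ a ∈ U, ∀ b ∈ U, a * b ∈ U) ∧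
      ∀ s ∈ T, ∃ g ∈ U, ∀ y ∈ L, (↑y : WithOne S) * s = ↑y * g with hGood
  have hGoodT : Good T :=
    ⟨subset_rfl, fun a ha b hb => aux_mul_mem_stabR ha hb,
      fun s hs => ⟨s, hs, fun y _ => rfl⟩⟩
  obtain ⟨U, hGU, hmin⟩ : ∃ U ∈ {U | Good U}, ∀ U' ∈ {U | Good U}, id U' ≤ id U → id U = id U' := by
    obtain ⟨U, hU⟩ := (Set.toFinite {U | Good U}).exists_minimal ⟨T, hGoodT⟩
    exact ⟨U, hU.prop, fun U' hU' hle => (hU.eq_of_le hU' hle).symm⟩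
  simp only [Set.mem_setOf_eq, id] at hGU hmin
  obtain ⟨hUT, hUmul, hUcov⟩ := hGU
  -- U is left- and right-simple: u * U = U and U * u = U for every u ∈ U
  have key : ∀ u ∈ U, (∀ b ∈ U, ∃ a ∈ U, u * a = b) ∧ (∀ b ∈ U, ∃ a ∈ U, a * u = b) := by
    intro u hu
    obtain ⟨v, hvT, hv1, hv2⟩ := aux_exists_inverse x₀ (hUT hu)
    constructor
    · -- left: U = u * U
      have h1 : Good ((fun a => u * a) '' U) := by
        refine ⟨?_, ?_, ?_⟩
        · rintro _ ⟨a, ha, rfl⟩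
          exact aux_mul_mem_stabR (hUT hu) (hUT ha)
        · rintro _ ⟨a, ha, rfl⟩ _ ⟨b, hb, rfl⟩
          exact ⟨a * (u * b), hUmul a ha _ (hUmul u hu b hb), by simp [mul_assoc]⟩
        · intro s hs
          obtain ⟨a, ha, hacov⟩ := hUcov (v * s) (aux_mul_mem_stabR hvT hs)
          refine ⟨u * a, ⟨a, ha, rfl⟩, ?_⟩
          intro y hy
          obtain ⟨z, hz, hyz⟩ := hUT hu y hy
          calc (↑y : WithOne S) * s = ↑y * (u * v) * s := by
                have := hv1 y hy
                rw [mul_assoc] at this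
                rw [this]
            _ = (↑y * u) * (v * s) := by simp [mul_assoc]
            _ = ↑z * (v * s) := by rw [hyz]
            _ = ↑z * a := hacov z hz
            _ = (↑y * u) * a := by rw [hyz]
            _ = ↑y * (u * a) := by rw [mul_assoc]
      have hsub : (fun a => u * a) '' U ⊆ U := by
        rintro _ ⟨a, ha, rfl⟩; exact hUmul u hu a ha
      have heq := hmin _ h1 hsub
      intro b hb
      have : b ∈ (fun a => u * a) '' U := by rw [← heq]; exact hb
      obtain ⟨a, ha, hab⟩ := this
      exact ⟨a, ha, hab⟩
    · -- right: U = U * u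
      have h1 : Good ((fun a => a * u) '' U) := by
        refine ⟨?_, ?_, ?_⟩
        · rintro _ ⟨a, ha, rfl⟩
          exact aux_mul_mem_stabR (hUT ha) (hUT hu)
        · rintro _ ⟨a, ha, rfl⟩ _ ⟨b, hb, rfl⟩
          exact ⟨a * u * b, hUmul _ (hUmul a ha u hu) b hb, by simp [mul_assoc]⟩
        · intro s hs
          obtain ⟨a, ha, hacov⟩ := hUcov (s * v) (aux_mul_mem_stabR hs hvT)
          refine ⟨a * u, ⟨a, ha, rfl⟩, ?_⟩
          intro y hy
          obtain ⟨z, hz, hyz⟩ := hs y hy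
          calc (↑y : WithOne S) * s = ↑z := hyz
            _ = ↑z * v * u := (hv2 z hz).symm
            _ = (↑y * s) * v * u := by rw [hyz]
            _ = (↑y * (s * v)) * u := by simp [mul_assoc]
            _ = (↑y * a) * u := by rw [hacov y hy]
            _ = ↑y * (a * u) := by rw [mul_assoc]
      have hsub : (fun a => a * u) '' U ⊆ U := by
        rintro _ ⟨a, ha, rfl⟩; exact hUmul a ha u hu
      have heq := hmin _ h1 hsub
      intro b hb
      have : b ∈ (fun a => a * u) '' U := by rw [← heq]; exact hb
      obtain ⟨a, ha, hab⟩ := this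
      exact ⟨a, ha, hab⟩
  -- U is nonempty
  obtain ⟨u₀, hu₀, -⟩ := hUcov 1 (aux_one_mem_stabR L)
  -- identity element
  obtain ⟨e, he, hue⟩ := (key u₀ hu₀).1 u₀ hu₀
  have hrid : ∀ a ∈ U, a * e = a := by
    intro a ha
    obtain ⟨b, hb, hba⟩ := (key u₀ hu₀).2 a ha
    rw [← hba, mul_assoc, hue]
  obtain ⟨f, hf, hfu⟩ := (key u₀ hu₀).2 u₀ hu₀
  have hlid : ∀ a ∈ U, f * a = a := by
    intro a ha
    obtain ⟨c, hc, hca⟩ := (key u₀ hu₀).1 a ha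
    rw [← hca, ← mul_assoc, hfu]
  have hef : e = f := by
    have h1 := hrid f hf
    have h2 := hlid e he
    rw [← h1, h2]
  subst hef
  refine ⟨U, hUT, ⟨hUmul, e, he, fun a ha => ⟨hlid a ha, hrid a ha⟩, ?_⟩, ?_⟩
  · -- inverses
    intro a ha
    obtain ⟨b, hb, hab⟩ := (key a ha).1 e he
    obtain ⟨c, hc, hca⟩ := (key a ha).2 e he
    have hbc : b = c := by
      calc b = e * b := (hlid b hb).symm
        _ = (c * a) * b := by rw [hca]
        _ = c * (a * b) := mul_assoc c a b
        _ = c * e := by rw [hab]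
        _ = c := hrid c hc
    exact ⟨b, hb, hab, by rw [hbc]; exact hca⟩
  · -- covering property for 𝓗-classes
    intro h hh s hs
    obtain ⟨g, hg, hgcov⟩ := hUcov s hs
    refine ⟨g, hg, ?_⟩
    intro x hx
    have hxL : x ∈ L := aux_eqL_trans hx.1 hh
    exact hgcov x hxL
end

section
/- Let b be a pre-blowup operator on S with multiplier m, and q, s ∈ S. Then: (1) if q 𝓛 s then qb 𝓛 sb; (2) if q ≤_𝓛 s then q ⊆ q m_{L_s}; (3) if q ≤_𝓛 s and s is an 𝐇-element then q = q m_{L_s}; (4) if qb 𝓡 q then qb = q; (5) if b is idempotent, the image of b equals the set of 𝐇-elements of S. -/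
open Pointwise

/-- The right stabilizer of a subset of `S`, as a submonoid of `S¹ = WithOne S`. -/
def stRsub {S : Type} [Semigroup S] (X : Set S) : Submonoid (WithOne S) where
  carrier := {u | ∀ x ∈ X, ∃ y ∈ X, (↑x * u : WithOne S) = ↑y}
  one_mem' := fun x hx => ⟨x, hx, mul_one _⟩
  mul_mem' := by
    intro u v hu hv x hx
    obtain ⟨y, hy, hxy⟩ := hu x hx
    obtain ⟨z, hz, hyz⟩ := hv y hy
    exact ⟨z, hz, by rw [← mul_assoc, hxy, hyz]⟩

/-- Right multiplication by an element of `S¹ = WithOne S`, as a map `S → S`. -/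
noncomputable def actW {S : Type} [Semigroup S] (q : S) (m : WithOne S) : S :=
  @dite _ (m = 1) (Classical.dec _) (fun _ => q) (fun h => q * WithOne.unone h)

/-- `s` is an 𝐇-element: the right Schützenberger group of its 𝓗-class lies in `V`;
equivalently, there is a group `G` in `V` and a surjection from the right stabilizer of
`H_s` onto `G` whose kernel is exactly the kernel of the action on `H_s`. -/
def IsHElement (V : GroupVariety) {S : Type} [Semigroup S] (s : S) : Prop :=
  ∃ (G : Type) (iG : Group G) (fG : Finite G), @GroupVariety.mem V G iG fG ∧
    ∃ f : ↥(stRsub (HClass s)) →* G, Function.Surjective f ∧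
      ∀ u v : ↥(stRsub (HClass s)),
        f u = f v ↔ ∀ x ∈ HClass s, ((↑x : WithOne S) * ↑u) = ↑x * ↑v

/-- A subset of `2^T` is H̄-saturated: a subsemigroup, downward closed, and closed
under taking unions of 𝐇-kernels of its subgroups. -/
def Saturated (V : GroupVariety) (T : Type) [Semigroup T] (A : Set (Set T)) : Prop :=
  (∀ X ∈ A, ∀ Y ∈ A, X * Y ∈ A) ∧
  (∀ X ∈ A, ∀ Y : Set T, Y ⊆ X → Y ∈ A) ∧
  (∀ (G : Type) (iG : Group G) (fG : Finite G) (ι : @MulHom G (Set T) _ _),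
      Function.Injective ι → (∀ g : G, ι g ∈ A) →
      (⋃ g ∈ (@HKer V.mem G iG fG : Subgroup G), ι g) ∈ A)

/-- The H̄-saturation of the set of singletons in `2^T`. -/
def SatSet (V : GroupVariety) (T : Type) [Semigroup T] [Finite T] : Set (Set T) :=
  ⋂₀ {A | Saturated V T A ∧ ∀ t : T, {t} ∈ A}

/-- The H̄-saturation `S = Sat_H̄(Tη)` of the singletons, as a subsemigroup of `2^T`. -/
def SatSub (V : GroupVariety) (T : Type) [Semigroup T] [Finite T] : Subsemigroup (Set T) where
  carrier := SatSet V T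
  mul_mem' := by
    intro a b ha hb
    rw [SatSet, Set.mem_sInter] at *
    exact fun A hA => hA.1.1 a (ha A hA) b (hb A hA)

/-- A pre-blowup operator on `S = Sat_H̄(Tη)`: (i) on each 𝓛-class it is given by right
multiplication by some `m_L ∈ S¹`; (ii) it fixes the 𝐇-elements and moves every other
element strictly 𝓗-downward; (iii) it enlarges each element (as a subset of `T`). -/
def IsPreBlowup (V : GroupVariety) (T : Type) [Semigroup T] [Finite T]
    (b : ↥(SatSub V T) → ↥(SatSub V T)) : Prop :=
  (∀ s : ↥(SatSub V T), ∃ m : WithOne ↥(SatSub V T), ∀ s', eqL s' s → b s' = actW s' m) ∧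
  (∀ s : ↥(SatSub V T), IsHElement V s → b s = s) ∧
  (∀ s : ↥(SatSub V T), ¬ IsHElement V s → leH (b s) s ∧ ¬ eqH (b s) s) ∧
  (∀ s : ↥(SatSub V T), (↑s : Set T) ⊆ (↑(b s) : Set T))

/-- A multiplier for an operator `b`: a function constant on 𝓛-classes such that
`b s = s · m_{L_s}` for all `s`. -/
def IsMultiplier {W : Type} [Semigroup W] (b : W → W) (m : W → WithOne W) : Prop :=
  (∀ q q', eqL q q' → m q = m q') ∧ ∀ s, b s = actW s (m s)


/-- In a finite monoid, every element has an idempotent power with positive exponent. -/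
lemma exists_idem_pow {M : Type*} [Monoid M] [Finite M] (a : M) :
    ∃ k, 1 ≤ k ∧ a ^ k * a ^ k = a ^ k := by
  obtain ⟨i, j, hij, hpow⟩ := Finite.exists_ne_map_eq_of_infinite (fun n : ℕ => a ^ n)
  wlog hlt : i < j generalizing i j
  · exact this j i hij.symm hpow.symm (by omega)
  set p := j - i with hp
  have hp1 : 1 ≤ p := by omega
  have hj : j = i + p := by omega
  have step : ∀ n, i ≤ n → a ^ (n + p) = a ^ n := by
    intro n hn
    obtain ⟨d, rfl⟩ : ∃ d, n = i + d := ⟨n - i, by omega⟩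
    have h1 : a ^ (i + d + p) = a ^ (i + p) * a ^ d := by
      rw [← pow_add]; congr 1; omega
    rw [h1, ← hj, ← hpow, ← pow_add]
  have rep : ∀ t n, i ≤ n → a ^ (n + t * p) = a ^ n := by
    intro t
    induction t with
    | zero => simp
    | succ t ih =>
      intro n hn
      have h2 : n + (t + 1) * p = n + t * p + p := by ring
      rw [h2, step _ (by omega), ih _ hn]
  refine ⟨(i + 1) * p, by nlinarith, ?_⟩
  rw [← pow_add]
  exact rep (i + 1) _ (by nlinarith)

/-- Stability in a finite semigroup: `x ≤_𝓛 y` and `y ≤_𝓡 x` imply `y ≤_𝓛 x`. -/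
lemma stability {S : Type} [Semigroup S] [Finite S] {x y : S}
    (h1 : leL x y) (h2 : leR y x) : leL y x := by
  haveI := Fintype.ofFinite S
  haveI : Finite (WithOne S) := inferInstanceAs (Finite (Option S))
  rcases h1 with rfl | ⟨a, rfl⟩
  · exact Or.inl rfl
  rcases h2 with h2 | ⟨v, h2⟩
  · exact Or.inl h2
  -- work in `WithOne S`
  have key : (y : WithOne S) = (a : WithOne S) * y * v := by
    exact_mod_cast congrArg (fun z : S => (z : WithOne S)) h2
  have iter : ∀ k : ℕ, (y : WithOne S) = (a : WithOne S) ^ k * y * (v : WithOne S) ^ k := by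
    intro k
    induction k with
    | zero => simp
    | succ k ih =>
      calc (y : WithOne S) = (a : WithOne S) * y * v := key
        _ = (a : WithOne S) * ((a : WithOne S) ^ k * y * (v : WithOne S) ^ k) * v := by
            rw [← ih]
        _ = (a : WithOne S) ^ (k + 1) * y * (v : WithOne S) ^ (k + 1) := by
            rw [pow_succ', pow_succ]
            simp only [mul_assoc]
  obtain ⟨k, hk1, hk⟩ := exists_idem_pow (a : WithOne S)
  have hy : (a : WithOne S) ^ k * y = y := by
    conv_rhs => rw [iter k]
    conv_lhs => rw [iter k]
    rw [← mul_assoc, ← mul_assoc, hk]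
  have hy2 : (y : WithOne S) = (a : WithOne S) ^ (2 * k - 1) * ((a : WithOne S) * y) := by
    have h2k : (a : WithOne S) ^ (2 * k) * y = y := by
      have h3 : (2 : ℕ) * k = k + k := by ring
      rw [h3, pow_add, mul_assoc, hy, hy]
    conv_lhs => rw [← h2k]
    rw [← mul_assoc, ← pow_succ]
    congr 2
    omega
  by_cases hone : (a : WithOne S) ^ (2 * k - 1) = 1
  · left
    have : (y : WithOne S) = ((a * y : S) : WithOne S) := by
      rw [hy2, hone, one_mul]; push_cast; ring_nf
    exact WithOne.coe_inj.mp this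
  · obtain ⟨w, hw⟩ := WithOne.ne_one_iff_exists.mp hone
    right
    refine ⟨w, WithOne.coe_inj.mp ?_⟩
    rw [hy2, ← hw]
    push_cast
    try rfl

lemma actW_one {S : Type} [Semigroup S] (q : S) : actW q (1 : WithOne S) = q := by
  simp [actW]

lemma actW_coe {S : Type} [Semigroup S] (q u : S) : actW q (u : WithOne S) = q * u := by
  have h : (u : WithOne S) ≠ 1 := WithOne.coe_ne_one
  simp only [actW]
  rw [dif_neg h, WithOne.unone_coe]

/-- Properties of a pre-blowup operator `b` with multiplier `m`. -/
theorem preblowup_properties (V : GroupVariety) (T : Type) [Semigroup T] [Finite T]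
    (b : ↥(SatSub V T) → ↥(SatSub V T)) (m : ↥(SatSub V T) → WithOne ↥(SatSub V T))
    (hb : IsPreBlowup V T b) (hm : IsMultiplier b m) :
    (∀ q s : ↥(SatSub V T), eqL q s → eqL (b q) (b s)) ∧
    (∀ q s : ↥(SatSub V T), leL q s → (↑q : Set T) ⊆ (↑(actW q (m s)) : Set T)) ∧
    (∀ q s : ↥(SatSub V T), leL q s → IsHElement V s → q = actW q (m s)) ∧
    (∀ q : ↥(SatSub V T), eqR (b q) q → b q = q) ∧
    ((∀ q, b (b q) = b q) → Set.range b = {s : ↥(SatSub V T) | IsHElement V s}) := by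
  obtain ⟨hb1, hb2, hb3, hb4⟩ := hb
  obtain ⟨hm1, hm2⟩ := hm
  refine ⟨?_, ?_, ?_, ?_, ?_⟩
  · -- (1) `b` preserves `𝓛`
    intro q s hqs
    have hmq : m q = m s := hm1 q s hqs
    rw [hm2 q, hm2 s, hmq]
    by_cases h1 : m s = 1
    · rw [h1, actW_one, actW_one]; exact hqs
    · obtain ⟨u, hu⟩ := WithOne.ne_one_iff_exists.mp h1
      rw [← hu, actW_coe, actW_coe]
      constructor
      · rcases hqs.1 with h | ⟨a, h⟩
        · exact Or.inl (by rw [h])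
        · exact Or.inr ⟨a, by rw [h, mul_assoc]⟩
      · rcases hqs.2 with h | ⟨a, h⟩
        · exact Or.inl (by rw [h])
        · exact Or.inr ⟨a, by rw [h, mul_assoc]⟩
  · -- (2) `q ⊆ q·m_{L_s}`
    intro q s hqs
    by_cases h1 : m s = 1
    · rw [h1, actW_one]
    · obtain ⟨u, hu⟩ := WithOne.ne_one_iff_exists.mp h1
      rw [← hu, actW_coe]
      have hs : (↑s : Set T) ⊆ ↑(s * u) := by
        have h4 := hb4 s
        rwa [hm2 s, ← hu, actW_coe] at h4
      rcases hqs with rfl | ⟨a, rfl⟩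
      · exact hs
      · have hcoe : ((a * s * u : ↥(SatSub V T)) : Set T) = (↑a : Set T) * ↑(s * u) := by
          rw [mul_assoc]
          exact MulMemClass.coe_mul _ _ _
        rw [hcoe, MulMemClass.coe_mul]
        exact Set.mul_subset_mul_left hs
  · -- (3) `q = q·m_{L_s}` when `s` is an 𝐇-element
    intro q s hqs hsH
    by_cases h1 : m s = 1
    · rw [h1, actW_one]
    · obtain ⟨u, hu⟩ := WithOne.ne_one_iff_exists.mp h1
      rw [← hu, actW_coe]
      have hs : s * u = s := by
        have h4 := hb2 s hsH
        rwa [hm2 s, ← hu, actW_coe] at h4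
      rcases hqs with rfl | ⟨a, rfl⟩
      · exact hs.symm
      · rw [mul_assoc, hs]
  · -- (4) `qb 𝓡 q → qb = q`
    intro q hR
    by_cases hH : IsHElement V q
    · exact hb2 q hH
    · exact absurd ⟨⟨(hb3 q hH).1.1, stability (hb3 q hH).1.1 hR.2⟩, hR⟩ (hb3 q hH).2
  · -- (5) idempotent `b` has image exactly the 𝐇-elements
    intro hidem
    ext s
    simp only [Set.mem_range, Set.mem_setOf_eq]
    constructor
    · rintro ⟨q, rfl⟩
      by_contra hH
      exact (hb3 (b q) hH).2 (by
        rw [hidem q]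
        exact ⟨⟨Or.inl rfl, Or.inl rfl⟩, Or.inl rfl, Or.inl rfl⟩)
    · intro hH
      exact ⟨s, hb2 s hH⟩
end

section
/- The infinite wreath product R^∞ of a transformation monoid (X, R) is a monoid of transformations of X* (the free monoid on X), and it is self-similar: for every F ∈ R^∞ and a ∈ X, the shifted transformation F_a, defined by (β·a)F = (βF_a)·(aF) for all β ∈ X*, belongs to R^∞. -/
open Pointwise

/-- Apply an `R`-definition `d` to a word (words are read right to left, so the head of
the list is the last letter and `d` is applied to the strict suffix). -/
def applyRDef {X R : Type} (act : X → R → X) (d : List X → R) : List X → List X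
  | [] => []
  | x :: q => act x (d q) :: applyRDef act d q

/-- The infinite wreath product `R^∞` of a right transformation monoid `(X, R)` is a
monoid of transformations of `X*`, and it is self-similar. -/
theorem rinf_monoid_selfsimilar (X R : Type) [Monoid R] (act : X → R → X)
    (hone : ∀ x, act x 1 = x) (hmul : ∀ x r r', act x (r * r') = act (act x r) r') :
    (∃ d : List X → R, (id : List X → List X) = applyRDef act d) ∧
    (∀ F G : List X → List X, (∃ d, F = applyRDef act d) → (∃ d, G = applyRDef act d) →
      ∃ d, (fun l => G (F l)) = applyRDef act d) ∧
    (∀ F : List X → List X, (∃ d, F = applyRDef act d) → ∀ a : X,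
      ∃ Fa : List X → List X, (∀ β, F (β ++ [a]) = Fa β ++ F [a]) ∧
        ∃ d, Fa = applyRDef act d) := by
  refine ⟨⟨fun _ => 1, funext fun l => ?_⟩, ?_, ?_⟩
  · induction l with
    | nil => rfl
    | cons x q ih => simp [applyRDef, hone, ← ih]
  · rintro F G ⟨d, rfl⟩ ⟨e, rfl⟩
    refine ⟨fun q => d q * e (applyRDef act d q), funext fun l => ?_⟩
    induction l with
    | nil => rfl
    | cons x q ih => simp [applyRDef, hmul, ih]
  · rintro F ⟨d, rfl⟩ a
    refine ⟨applyRDef act (fun q => d (q ++ [a])), fun β => ?_, fun q => d (q ++ [a]), rfl⟩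
    induction β with
    | nil => rfl
    | cons x q ih => simp [applyRDef, ih]
end

section
/- Let T be a finite semigroup and S a downward-closed subsemigroup of 2^T. Let K be a subgroup of S generated by a subset 𝒳. Then ⋃K ∈ S if and only if ⋃⟨X⟩ ∈ S for every X ∈ 𝒳, where ⟨X⟩ denotes the cyclic subgroup generated by X. -/
open Pointwise

/-- Positive powers of a subset of a semigroup: `spow X n = X^(n+1)`. -/
def spow {T : Type} [Semigroup T] (X : Set T) : ℕ → Set T
  | 0 => X
  | n + 1 => spow X n * X

lemma spow_add {T : Type} [Semigroup T] (X : Set T) (m n : ℕ) :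
    spow X (m + n + 1) = spow X m * spow X n := by
  induction n with
  | zero => rfl
  | succ n ih =>
    show spow X (m + n + 1) * X = spow X m * (spow X n * X)
    rw [ih, mul_assoc]

/-- For a downward-closed subsemigroup `S` of `2^T` and a subgroup `K` of `S` generated
by `𝒳`, the union `⋃K` lies in `S` iff the union of the cyclic subgroup generated by
each `X ∈ 𝒳` lies in `S`. -/
theorem union_subgroup_mem (T : Type) [Semigroup T] [Finite T] (S : Set (Set T))
    (hmul : ∀ X ∈ S, ∀ Y ∈ S, X * Y ∈ S)
    (hdown : ∀ X ∈ S, ∀ Y : Set T, Y ⊆ X → Y ∈ S)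
    (K : Set (Set T)) (hKS : K ⊆ S) (hK : IsSubgroupSet K)
    (𝒳 : Set (Set T)) (h𝒳 : 𝒳 ⊆ K)
    (hgen : ∀ K' : Set (Set T), K' ⊆ K → IsSubgroupSet K' → 𝒳 ⊆ K' → K ⊆ K') :
    ⋃₀ K ∈ S ↔ ∀ X ∈ 𝒳, (⋃ n : ℕ, spow X n) ∈ S := by
  obtain ⟨hKmul, e, heK, hid, hinv⟩ := hK
  -- powers of elements of K stay in K
  have hspowK : ∀ a ∈ K, ∀ n, spow a n ∈ K := by
    intro a ha n
    induction n with
    | zero => exact ha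
    | succ n ih => exact hKmul _ ih _ ha
  have hee : e * e = e := (hid e heK).1
  -- some power of any element of K equals e
  have hpow_e : ∀ a ∈ K, ∃ n, spow a n = e := by
    intro a ha
    obtain ⟨i, j, hij, hfij⟩ := Finite.exists_ne_map_eq_of_infinite (spow a)
    -- wlog i < j
    wlog hlt : i < j generalizing i j
    · exact this j i hij.symm hfij.symm (by omega)
    obtain ⟨d, rfl⟩ : ∃ d, j = i + d + 1 := ⟨j - i - 1, by omega⟩
    rw [spow_add] at hfij
    obtain ⟨b, hbK, hab, hba⟩ := hinv _ (hspowK a ha i)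
    refine ⟨d, ?_⟩
    have h2 : b * spow a i = b * (spow a i * spow a d) := by rw [← hfij]
    rw [hba, ← mul_assoc, hba, (hid _ (hspowK a ha d)).1] at h2
    exact h2.symm
  constructor
  · -- forward direction
    intro hU X hX
    refine hdown _ hU _ ?_
    refine Set.iUnion_subset fun n => ?_
    exact Set.subset_sUnion_of_mem (hspowK X (h𝒳 hX) n)
  · -- backward direction
    intro hcyc
    -- the "saturated" family
    set 𝒮₀ : Set (Set T) :=
      {A | A ∈ S ∧ (∀ t ∈ A, ∃ Y ∈ K, Y ⊆ A ∧ t ∈ Y) ∧ e ⊆ A} with h𝒮₀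
    have sat_mul_e : ∀ A : Set T, (∀ t ∈ A, ∃ Y ∈ K, Y ⊆ A ∧ t ∈ Y) → A * e = A := by
      intro A hA
      apply subset_antisymm
      · rintro t ⟨p, hp, s, hs, rfl⟩
        obtain ⟨Y, hYK, hYA, hpY⟩ := hA p hp
        have : p * s ∈ Y * e := Set.mul_mem_mul hpY hs
        rw [(hid Y hYK).2] at this
        exact hYA this
      · intro t ht
        obtain ⟨Y, hYK, hYA, htY⟩ := hA t ht
        have : t ∈ Y * e := by rw [(hid Y hYK).2]; exact htY
        exact Set.mul_subset_mul hYA subset_rfl this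
    have sat_e_mul : ∀ A : Set T, (∀ t ∈ A, ∃ Y ∈ K, Y ⊆ A ∧ t ∈ Y) → e * A = A := by
      intro A hA
      apply subset_antisymm
      · rintro t ⟨s, hs, p, hp, rfl⟩
        obtain ⟨Y, hYK, hYA, hpY⟩ := hA p hp
        have : s * p ∈ e * Y := Set.mul_mem_mul hs hpY
        rw [(hid Y hYK).1] at this
        exact hYA this
      · intro t ht
        obtain ⟨Y, hYK, hYA, htY⟩ := hA t ht
        have : t ∈ e * Y := by rw [(hid Y hYK).1]; exact htY
        exact Set.mul_subset_mul subset_rfl hYA this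
    have h𝒮₀mul : ∀ A ∈ 𝒮₀, ∀ B ∈ 𝒮₀, A * B ∈ 𝒮₀ := by
      rintro A ⟨hAS, hAsat, hAe⟩ B ⟨hBS, hBsat, hBe⟩
      refine ⟨hmul _ hAS _ hBS, ?_, ?_⟩
      · rintro t ⟨p, hp, q, hq, rfl⟩
        obtain ⟨Y, hYK, hYA, hpY⟩ := hAsat p hp
        obtain ⟨Z, hZK, hZB, hqZ⟩ := hBsat q hq
        exact ⟨Y * Z, hKmul _ hYK _ hZK, Set.mul_subset_mul hYA hZB,
          Set.mul_mem_mul hpY hqZ⟩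
      · calc e = e * e := hee.symm
          _ ⊆ A * B := Set.mul_subset_mul hAe hBe
    have he𝒮₀ : e ∈ 𝒮₀ :=
      ⟨hKS heK, fun t ht => ⟨e, heK, subset_rfl, ht⟩, subset_rfl⟩
    -- a maximal element of 𝒮₀
    obtain ⟨P, hP𝒮₀, hPmax⟩ :=
      Set.Finite.exists_maximalFor id 𝒮₀ (Set.toFinite 𝒮₀) ⟨e, he𝒮₀⟩
    have hPtop : ∀ A ∈ 𝒮₀, A ⊆ P := by
      intro A hA
      have hAP : A * P ∈ 𝒮₀ := h𝒮₀mul A hA P hP𝒮₀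
      have hP_sub : P ⊆ A * P := by
        have : e * P ⊆ A * P := Set.mul_subset_mul hA.2.2 subset_rfl
        rwa [sat_e_mul P hP𝒮₀.2.1] at this
      have hPeq : P = A * P := subset_antisymm hP_sub (hPmax hAP hP_sub)
      have : A * e ⊆ A * P := Set.mul_subset_mul subset_rfl hP𝒮₀.2.2
      rw [sat_mul_e A hA.2.1] at this
      exact this.trans hPeq.symm.subset
    -- K is contained in the subsemigroup closure of insert e 𝒳
    set L := Subsemigroup.closure (insert e 𝒳) with hL
    have hLK : (L : Set (Set T)) ⊆ K := by
      intro x hx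
      induction hx using Subsemigroup.closure_induction with
      | mem y hy => rcases hy with rfl | hy; exact heK; exact h𝒳 hy
      | mul y z _ _ hy hz => exact hKmul _ hy _ hz
    have hspowL : ∀ a ∈ L, ∀ n, spow a n ∈ L := by
      intro a ha n
      induction n with
      | zero => exact ha
      | succ n ih => exact mul_mem ih ha
    have heL : e ∈ L := Subsemigroup.subset_closure (Set.mem_insert e 𝒳)
    have hLgrp : IsSubgroupSet (L : Set (Set T)) := by
      refine ⟨fun a ha b hb => mul_mem ha hb, e, heL, fun a ha => hid a (hLK ha), ?_⟩
      intro a ha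
      obtain ⟨n, hn⟩ := hpow_e a (hLK ha)
      cases n with
      | zero =>
        refine ⟨e, heL, ?_, ?_⟩ <;>
          · rw [show a = e from hn]; exact hee
      | succ n =>
        refine ⟨spow a n, hspowL a ha n, ?_, ?_⟩
        · show spow a 0 * spow a n = e
          rw [← spow_add, Nat.zero_add]; exact hn
        · show spow a n * spow a 0 = e
          rw [← spow_add]; exact hn
    have hKL : K ⊆ (L : Set (Set T)) :=
      hgen _ hLK hLgrp (fun X hX => Subsemigroup.subset_closure (Set.mem_insert_of_mem _ hX))
    -- every element of L is contained in some member of 𝒮₀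
    have hbound : ∀ x ∈ L, ∃ A ∈ 𝒮₀, x ⊆ A := by
      intro x hx
      induction hx using Subsemigroup.closure_induction with
      | mem y hy =>
        rcases hy with h | hy
        · exact ⟨e, he𝒮₀, h ▸ subset_rfl⟩
        · refine ⟨⋃ n, spow y n, ⟨hcyc y hy, ?_, ?_⟩, ?_⟩
          · intro t ht
            obtain ⟨n, hn⟩ : ∃ n, t ∈ spow y n := by simpa using ht
            exact ⟨spow y n, hspowK y (h𝒳 hy) n, Set.subset_iUnion _ n, hn⟩
          · obtain ⟨n, hn⟩ := hpow_e y (h𝒳 hy)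
            rw [← hn]; exact Set.subset_iUnion (spow y) n
          · exact Set.subset_iUnion (spow y) 0
      | mul y z _ _ hy hz =>
        obtain ⟨A, hA, hyA⟩ := hy
        obtain ⟨B, hB, hzB⟩ := hz
        exact ⟨A * B, h𝒮₀mul A hA B hB, Set.mul_subset_mul hyA hzB⟩
    -- conclude
    refine hdown P hP𝒮₀.1 _ ?_
    intro t ht
    obtain ⟨Y, hYK, htY⟩ := ht
    obtain ⟨A, hA, hYA⟩ := hbound Y (hKL hYK)
    exact hPtop A hA (hYA htY)
end
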